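/- Let M be a 2m×k complex matrix with Mᵀ·M = I_k and N a 2m×n complex matrix with Nᵀ·N = I_n, and let U = (2·M·Mᵀ − I_{2m})·(2·N·Nᵀ − I_{2m}). Then for every complex number u with u ≠ 1 and u ≠ −1, det(I_{2m} − u·U) = (1−u)^{2m−n−k} · (1+u)^{n−k} · det((1+u)²·I_k − 4u·Mᵀ·N·Nᵀ·M). -/

import Mathlib

open Matrix

theorem vertex_face_walk_det (m n k : ℕ) (hn : n ≤ 2 * m) (hk : k ≤ 2 * m)
    (M : Matrix (Fin (2 * m)) (Fin k) ℂ) (N : Matrix (Fin (2 * m)) (Fin n) ℂ)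
    (hM : Mᵀ * M = 1) (hN : Nᵀ * N = 1)
    (u : ℂ) (hu1 : u ≠ 1) (hu2 : u ≠ -1) :
    ((1 : Matrix (Fin (2 * m)) (Fin (2 * m)) ℂ) - u • ((2 • (M * Mᵀ) - 1) * (2 • (N * Nᵀ) - 1))).det
      = (1 - u) ^ ((2 * m : ℤ) - n - k) * (1 + u) ^ ((n : ℤ) - k) *
        ((1 + u) ^ 2 • (1 : Matrix (Fin k) (Fin k) ℂ) - (4 * u) • (Mᵀ * N * Nᵀ * M)).det := by
  have hu1' : (1 : ℂ) - u ≠ 0 := sub_ne_zero.mpr (fun h => hu1 h.symm)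
  have hu2' : (1 : ℂ) + u ≠ 0 := by
    intro h; apply hu2; linear_combination h
  set c : ℂ := 2 * u / (1 - u) with hc
  have hc1 : (1 - u) * c = 2 * u := by rw [hc]; field_simp
  have h1c : 1 + c = (1 + u) / (1 - u) := by rw [eq_div_iff hu1']; linear_combination hc1
  have h1c0 : 1 + c ≠ 0 := by rw [h1c]; exact div_ne_zero hu2' hu1'
  set P := M * Mᵀ with hP
  set Q := N * Nᵀ with hQ
  set A := Mᵀ * N with hA
  set X : Matrix (Fin (2 * m)) (Fin k ⊕ Fin n) ℂ := fromCols M N with hX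
  set Y : Matrix (Fin k ⊕ Fin n) (Fin (2 * m)) ℂ :=
    fromRows (c • (Mᵀ - (2 : ℂ) • (Mᵀ * Q))) (c • Nᵀ) with hY
  -- Step 1: the big matrix factors as (1-u) • (1 + X*Y)
  have hXY : X * Y = c • (P - (2 : ℂ) • (P * Q)) + c • Q := by
    rw [hX, hY, fromCols_mul_fromRows]
    simp only [Matrix.mul_smul, Matrix.mul_sub, ← Matrix.mul_assoc, ← hP, ← hQ]
  have hXY2 : (1 - u) • (X * Y) = (2 * u) • P - (4 * u) • (P * Q) + (2 * u) • Q := by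
    rw [hXY, smul_add, smul_smul, smul_smul, hc1, smul_sub, smul_smul]
    module
  have hfac : (1 : Matrix (Fin (2 * m)) (Fin (2 * m)) ℂ) -
      u • ((2 • (M * Mᵀ) - 1) * (2 • (N * Nᵀ) - 1)) = (1 - u) • (1 + X * Y) := by
    rw [smul_add, hXY2, ← hP, ← hQ]
    simp only [← Nat.cast_smul_eq_nsmul ℂ, Nat.cast_ofNat]
    simp only [Matrix.sub_mul, Matrix.mul_sub, Matrix.one_mul, Matrix.mul_one,
      smul_mul_assoc, mul_smul_comm, smul_smul, smul_sub, smul_add]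
    module
  rw [hfac, Matrix.det_smul, Matrix.det_one_add_mul_comm]
  -- Step 2: compute Y * X as a block matrix
  have hAM : Mᵀ * Q * M = A * Aᵀ := by
    rw [hQ, hA, Matrix.transpose_mul, Matrix.transpose_transpose]
    simp only [Matrix.mul_assoc]
  have hAN : Mᵀ * Q * N = A := by
    rw [hQ, hA, Matrix.mul_assoc, Matrix.mul_assoc, hN, Matrix.mul_one]
  have hB11 : c • (Mᵀ - (2 : ℂ) • (Mᵀ * Q)) * M
      = c • (1 : Matrix (Fin k) (Fin k) ℂ) - (2 * c) • (A * Aᵀ) := by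
    rw [Matrix.smul_mul, Matrix.sub_mul, Matrix.smul_mul, hAM, hM, smul_sub, smul_smul, mul_comm]
  have hB12 : c • (Mᵀ - (2 : ℂ) • (Mᵀ * Q)) * N = (-c) • A := by
    rw [Matrix.smul_mul, Matrix.sub_mul, Matrix.smul_mul, hAN, ← hA, smul_sub, smul_smul]
    module
  have hB21 : (c • Nᵀ) * M = c • Aᵀ := by
    rw [Matrix.smul_mul, hA, Matrix.transpose_mul, Matrix.transpose_transpose]
  have hB22 : (c • Nᵀ) * N = c • (1 : Matrix (Fin n) (Fin n) ℂ) := by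
    rw [Matrix.smul_mul, hN]
  have hYX : (1 : Matrix (Fin k ⊕ Fin n) (Fin k ⊕ Fin n) ℂ) + Y * X =
      fromBlocks ((1 + c) • 1 - (2 * c) • (A * Aᵀ)) ((-c) • A) (c • Aᵀ) ((1 + c) • 1) := by
    rw [hY, hX, fromRows_mul_fromCols, hB11, hB12, hB21, hB22, ← fromBlocks_one,
      fromBlocks_add]
    rw [Matrix.fromBlocks_inj]
    refine ⟨by module, by rw [zero_add], by rw [zero_add], by module⟩
  rw [hYX]
  -- Step 3: block determinant
  haveI : Invertible ((1 + c) • (1 : Matrix (Fin n) (Fin n) ℂ)) :=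
    ⟨(1 + c)⁻¹ • 1, by rw [smul_mul_smul_comm, inv_mul_cancel₀ h1c0, one_smul, one_mul],
      by rw [smul_mul_smul_comm, mul_inv_cancel₀ h1c0, one_smul, one_mul]⟩
  rw [Matrix.det_fromBlocks₂₂]
  have hinv : ⅟((1 + c) • (1 : Matrix (Fin n) (Fin n) ℂ)) = (1 + c)⁻¹ • 1 :=
    invOf_eq_right_inv (by rw [smul_mul_smul_comm, mul_inv_cancel₀ h1c0, one_smul, one_mul])
  rw [hinv]
  -- Step 4: identify the Schur complement
  have he1 : ((1 - u) * (1 + u))⁻¹ * (1 + u) ^ 2 = 1 + c := by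
    rw [h1c]; field_simp
  have he2 : ((1 - u) * (1 + u))⁻¹ * (4 * u) = 2 * c + -c * ((1 + c)⁻¹ * c) := by
    rw [h1c, hc]; field_simp; ring
  have hschur : (1 + c) • (1 : Matrix (Fin k) (Fin k) ℂ) - (2 * c) • (A * Aᵀ) -
      (-c) • A * ((1 + c)⁻¹ • (1 : Matrix (Fin n) (Fin n) ℂ)) * (c • Aᵀ) =
      (((1 - u) * (1 + u))⁻¹) • ((1 + u) ^ 2 • (1 : Matrix (Fin k) (Fin k) ℂ)
        - (4 * u) • (A * Aᵀ)) := by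
    simp only [Matrix.smul_mul, Matrix.mul_smul, Matrix.mul_one, smul_smul, smul_sub]
    rw [he1, he2]
    module
  rw [hschur, Matrix.det_smul, Matrix.det_smul, Matrix.det_one, mul_one]
  -- Step 5: put the scalars together
  have hAcomp : A * Aᵀ = Mᵀ * N * Nᵀ * M := by
    rw [hA, Matrix.transpose_mul, Matrix.transpose_transpose]
    simp only [Matrix.mul_assoc]
  rw [hAcomp]
  simp only [Fintype.card_fin, Fintype.card_sum]
  set D := ((1 + u) ^ 2 • (1 : Matrix (Fin k) (Fin k) ℂ) - (4 * u) • (Mᵀ * N * Nᵀ * M)).det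
  have hscal : (1 - u) ^ (2 * m) * ((1 + c) ^ n * (((1 - u) * (1 + u))⁻¹) ^ k)
      = (1 - u) ^ ((2 * m : ℤ) - n - k) * (1 + u) ^ ((n : ℤ) - k) := by
    rw [h1c]
    rw [show ((2 * m : ℤ) - n - k) = ((2 * m : ℕ) : ℤ) - (n : ℤ) - (k : ℤ) by push_cast; ring]
    rw [zpow_sub₀ hu1', zpow_sub₀ hu1', zpow_sub₀ hu2', zpow_natCast, zpow_natCast,
      zpow_natCast, zpow_natCast]
    rw [div_pow, mul_inv, mul_pow]
    field_simp
    ring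
    simp only [zpow_natCast, inv_pow]
    field_simp
  calc (1 - u) ^ (2 * m) * ((1 + c) ^ n * ((((1 - u) * (1 + u))⁻¹) ^ k * D))
      = (1 - u) ^ (2 * m) * ((1 + c) ^ n * (((1 - u) * (1 + u))⁻¹) ^ k) * D := by ring
    _ = (1 - u) ^ ((2 * m : ℤ) - n - k) * (1 + u) ^ ((n : ℤ) - k) * D := by rw [hscal]
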